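/- Let X be a Banach space, F a regular thin family, and (x_s)_{s∈F} a bounded F-sequence in X (i.e. there is C > 0 with ‖x_s‖ ≤ C for all s ∈ F). Then for every sequence (δ_n) of positive real numbers and every N ∈ [ℕ]^∞ there exists M ∈ [N]^∞ such that for every l ∈ ℕ, every 1 ≤ k ≤ l, every a₁,…,a_k ∈ [−1,1] and all plegma k-tuples (t₁,…,t_k) and (s₁,…,s_k) in F↾M with s₁(1) ≥ M(l) and t₁(1) ≥ M(l), one has |‖Σ_{j=1}^k a_j x_{t_j}‖ − ‖Σ_{j=1}^k a_j x_{s_j}‖| ≤ δ_l. -/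

import Mathlib

open Set Filter

namespace HOSM

/-- `t` is an initial segment of the finite set `s` (w.r.t. the increasing enumerations). -/
def InitSeg (t s : Finset ℕ) : Prop :=
  t ⊆ s ∧ ∀ a ∈ s, ∀ b ∈ t, a ≤ b → a ∈ t

/-- `t` is a proper initial segment of `s`. -/
def ProperInitSeg (t s : Finset ℕ) : Prop := InitSeg t s ∧ t ≠ s

/-- The initial-segment closure `F̂` of a family `F`. -/
def hat (F : Set (Finset ℕ)) : Set (Finset ℕ) := {t | ∃ s ∈ F, InitSeg t s}

/-- The restriction `F↾L = {s ∈ F : s ⊆ L}`. -/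
def restrict (F : Set (Finset ℕ)) (L : Set ℕ) : Set (Finset ℕ) :=
  {s | s ∈ F ∧ (s : Set ℕ) ⊆ L}

/-- `F` is hereditary: it contains all subsets of its members. -/
def Hereditary (F : Set (Finset ℕ)) : Prop := ∀ s ∈ F, ∀ t ⊆ s, t ∈ F

/-- `elt s k` is the `k`-th smallest element of `s` (0-indexed; junk value `0` out of range). -/
def elt (s : Finset ℕ) (k : ℕ) : ℕ := (s.sort (· ≤ ·)).getD k 0

/-- `F` is spreading. -/
def Spreading (F : Set (Finset ℕ)) : Prop :=
  ∀ s ∈ F, ∀ t : Finset ℕ, t.card = s.card → (∀ k < s.card, elt s k ≤ elt t k) → t ∈ F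

/-- The characteristic function of a finite set, as an element of `{0,1}^ℕ`. -/
def chi (s : Finset ℕ) : ℕ → Bool := fun n => decide (n ∈ s)

/-- `F` is compact: the set of characteristic functions of its members is closed in `{0,1}^ℕ`. -/
def CompactFam (F : Set (Finset ℕ)) : Prop := IsClosed (chi '' F)

/-- `F` is regular: compact, hereditary and spreading. -/
def RegularFam (F : Set (Finset ℕ)) : Prop := CompactFam F ∧ Hereditary F ∧ Spreading F

/-- `F` is thin: no member is a proper initial segment of another member. -/
def Thin (F : Set (Finset ℕ)) : Prop := ∀ s ∈ F, ∀ t ∈ F, ¬ ProperInitSeg t s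

/-- `F` is regular thin: thin, and its closure `F̂` is regular. -/
def RegularThin (F : Set (Finset ℕ)) : Prop := Thin F ∧ RegularFam (hat F)

/-- The relation on finite sets: `extRel F t s` iff `t ∈ F̂` and `s` is a proper initial
segment of `t`.  Rank with respect to it computes the order `o_{F̂}`. -/
def extRel (F : Set (Finset ℕ)) (t s : Finset ℕ) : Prop := t ∈ hat F ∧ ProperInitSeg s t

open scoped Classical in
/-- The order `o(F)` of a family: the ordinal rank of the tree `F̂` at `∅`
(junk value `0` if `F̂` is ill-founded). -/
noncomputable def famOrder (F : Set (Finset ℕ)) : Ordinal :=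
  if h : Acc (extRel F) (∅ : Finset ℕ) then h.rank else 0

/-- `nth L k` is the `k`-th smallest element of the set `L` (0-indexed). -/
noncomputable def nth (L : Set ℕ) (k : ℕ) : ℕ := Nat.nth (· ∈ L) k

/-- `L(s) = {L(k) : k ∈ s}` for a finite set `s`. -/
noncomputable def mapSet (L : Set ℕ) (s : Finset ℕ) : Finset ℕ := s.image (nth L)

/-- An `l`-tuple of nonempty finite subsets of `ℕ` is a plegma family. -/
def IsPlegma {l : ℕ} (s : Fin l → Finset ℕ) : Prop :=
  (∀ i, (s i).Nonempty) ∧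
  (∀ i j : Fin l, i < j → ∀ k, k < (s i).card → k < (s j).card →
      elt (s i) k < elt (s j) k) ∧
  (∀ i j : Fin l, ∀ k, k < (s i).card → k + 1 < (s j).card →
      elt (s i) k < elt (s j) (k + 1))

/-- A plegma pair. -/
def IsPlegmaPair (s t : Finset ℕ) : Prop := IsPlegma ![s, t]

/-- `Plm l G`: the set of plegma `l`-tuples with members in `G`. -/
def Plm (l : ℕ) (G : Set (Finset ℕ)) : Set (Fin l → Finset ℕ) :=
  {s | IsPlegma s ∧ ∀ i, s i ∈ G}

/-- `s` is an initial segment of the infinite set `N`. -/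
def InitSegOfInf (s : Finset ℕ) (N : Set ℕ) : Prop :=
  (s : Set ℕ) ⊆ N ∧ ∀ a ∈ N, ∀ b ∈ s, a ≤ b → a ∈ s

/-- `F` is very large in `M`: every infinite subset of `M` has an initial segment in `F`. -/
def VeryLarge (F : Set (Finset ℕ)) (M : Set ℕ) : Prop :=
  ∀ N : Set ℕ, N ⊆ M → N.Infinite → ∃ s ∈ F, InitSegOfInf s N

/-- `F↾↾L`. -/
def restrict2 (F : Set (Finset ℕ)) (L : Set ℕ) : Set (Finset ℕ) :=
  {s | s ∈ restrict F L ∧ ∀ j, j + 1 < s.card → ∃ l ∈ L, elt s j < l ∧ l < elt s (j + 1)}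

/-- `φ` is plegma preserving on `D`. -/
def PlegmaPreserving (D : Set (Finset ℕ)) (φ : Finset ℕ → Finset ℕ) : Prop :=
  ∀ s₁ ∈ D, ∀ s₂ ∈ D, IsPlegmaPair s₁ s₂ → IsPlegmaPair (φ s₁) (φ s₂)

end HOSM

namespace HOSM

/-- The product topology on finite subsets of `ℕ`, induced from `{0,1}^ℕ`
via characteristic functions. -/
instance : TopologicalSpace (Finset ℕ) := TopologicalSpace.induced chi inferInstance

/-- The `F`-subsequence `(x_s)_{s ∈ F↾L}` is subordinated with respect to the topological
space `X`: there is a continuous map `φ̂ : F̂↾L → X` with `φ̂ s = x s` for `s ∈ F↾L`. -/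
def Subordinated {X : Type*} [TopologicalSpace X]
    (F : Set (Finset ℕ)) (L : Set ℕ) (x : Finset ℕ → X) : Prop :=
  ∃ φ : Finset ℕ → X, ContinuousOn φ (restrict (hat F) L) ∧ ∀ s ∈ restrict F L, φ s = x s

/-- `(x_s)_{s ∈ F↾L}` is subordinated with respect to the weak topology of the normed
space `X` (continuity into the weak topology = continuity of all composites with
continuous linear functionals). -/
def SubordinatedWeak {X : Type*} [NormedAddCommGroup X] [NormedSpace ℝ X]
    (F : Set (Finset ℕ)) (L : Set ℕ) (x : Finset ℕ → X) : Prop :=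
  ∃ φ : Finset ℕ → X,
    (∀ f : X →L[ℝ] ℝ, ContinuousOn (fun s => f (φ s)) (restrict (hat F) L)) ∧
    ∀ s ∈ restrict F L, φ s = x s

/-- The `F`-subsequence `(x_s)_{s ∈ F↾L}` is weakly null: it converges to `0` in the
weak topology of `X`. -/
def WeaklyNullSub {X : Type*} [NormedAddCommGroup X] [NormedSpace ℝ X]
    (F : Set (Finset ℕ)) (L : Set ℕ) (x : Finset ℕ → X) : Prop :=
  ∀ f : X →L[ℝ] ℝ, ∀ ε > (0 : ℝ), ∃ m : ℕ,
    ∀ s ∈ restrict F L, nth L m ≤ elt s 0 → |f (x s)| < ε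

/-- `(x_s)_{s ∈ F↾M}` generates `(e_n)` as an `F`-spreading model with respect to the
sequence of errors `(δ_l)`. -/
def GeneratesSM {X E : Type*} [NormedAddCommGroup X] [NormedSpace ℝ X]
    [SeminormedAddCommGroup E] [NormedSpace ℝ E]
    (F : Set (Finset ℕ)) (M : Set ℕ) (x : Finset ℕ → X) (e : ℕ → E) (δ : ℕ → ℝ) : Prop :=
  ∀ l k : ℕ, 1 ≤ k → k ≤ l → ∀ a : Fin k → ℝ, (∀ j, |a j| ≤ 1) →
    ∀ s : Fin k → Finset ℕ, IsPlegma s → (∀ j, s j ∈ restrict F M) →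
      (∀ j, nth M l ≤ elt (s j) 0) →
      |‖∑ j, a j • x (s j)‖ - ‖∑ j, a j • e (j : ℕ)‖| ≤ δ l

/-- `(x_s)_{s ∈ F↾M}` generates `(e_n)` as an `F`-spreading model (for some null
sequence of positive errors). -/
def Generates {X E : Type*} [NormedAddCommGroup X] [NormedSpace ℝ X]
    [SeminormedAddCommGroup E] [NormedSpace ℝ E]
    (F : Set (Finset ℕ)) (M : Set ℕ) (x : Finset ℕ → X) (e : ℕ → E) : Prop :=
  ∃ δ : ℕ → ℝ, (∀ n, 0 < δ n) ∧ Tendsto δ atTop (nhds 0) ∧ GeneratesSM F M x e δ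

/-- `(x_s)_{s ∈ F}` admits `(e_n)` as an `F`-spreading model. -/
def Admits {X E : Type*} [NormedAddCommGroup X] [NormedSpace ℝ X]
    [SeminormedAddCommGroup E] [NormedSpace ℝ E]
    (F : Set (Finset ℕ)) (x : Finset ℕ → X) (e : ℕ → E) : Prop :=
  ∃ M : Set ℕ, M.Infinite ∧ Generates F M x e

end HOSM

open HOSM

namespace GPX

lemma count_range {g : ℕ → ℕ} [DecidablePred (· ∈ Set.range g)] (hg : StrictMono g) (n : ℕ) :
    Nat.count (· ∈ Set.range g) (g n) = n := by
  rw [Nat.count_eq_card_filter_range]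
  have h2 : ((Finset.range (g n)).filter (· ∈ Set.range g)).card
      = ((Finset.range n).image g).card := by
    congr 1
    ext x
    simp only [Finset.mem_filter, Finset.mem_range, Finset.mem_image, Set.mem_range]
    constructor
    · rintro ⟨hx, m, rfl⟩
      exact ⟨m, hg.lt_iff_lt.mp hx, rfl⟩
    · rintro ⟨m, hm, rfl⟩
      exact ⟨hg hm, m, rfl⟩
  rw [h2, Finset.card_image_of_injective _ hg.injective, Finset.card_range]

lemma nth_range {g : ℕ → ℕ} (hg : StrictMono g) (n : ℕ) :
    Nat.nth (· ∈ Set.range g) n = g n := by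
  classical
  have h := Nat.nth_count (p := (· ∈ Set.range g)) (n := g n) ⟨n, rfl⟩
  rwa [count_range hg] at h

lemma range_infinite {g : ℕ → ℕ} (hg : StrictMono g) : (Set.range g).Infinite :=
  Set.infinite_range_of_injective hg.injective

/-! ### Combinatorial forcing -/

variable (c : Set ℕ → Bool)

def Accepts (s : Finset ℕ) (L : Set ℕ) : Prop :=
  ∀ K ⊆ L, K.Infinite → c (↑s ∪ K) = true

def Rejects (s : Finset ℕ) (L : Set ℕ) : Prop :=
  ∀ K ⊆ L, K.Infinite → ¬ Accepts c s K

variable {c}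

lemma Accepts.mono {s : Finset ℕ} {L L' : Set ℕ} (h : Accepts c s L) (h' : L' ⊆ L) :
    Accepts c s L' := fun K hK => h K (hK.trans h')

lemma Rejects.mono {s : Finset ℕ} {L L' : Set ℕ} (h : Rejects c s L) (h' : L' ⊆ L) :
    Rejects c s L' := fun K hK => h K (hK.trans h')

lemma decide_dichotomy (s : Finset ℕ) (L : Set ℕ) (hL : L.Infinite) :
    ∃ K, K ⊆ L ∧ K.Infinite ∧ (Accepts c s K ∨ Rejects c s K) := by
  by_cases h : ∃ K, K ⊆ L ∧ K.Infinite ∧ Accepts c s K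
  · obtain ⟨K, h1, h2, h3⟩ := h
    exact ⟨K, h1, h2, Or.inl h3⟩
  · refine ⟨L, subset_rfl, hL, Or.inr ?_⟩
    intro K hK hKinf hacc
    exact h ⟨K, hK, hKinf, hacc⟩

/-- Diagonal lemma: from a rejected `s` we can go to `L'` all of whose one-point
extensions are rejected by the corresponding tails. -/
lemma diagonal {s : Finset ℕ} {L : Set ℕ} (hL : L.Infinite) (hrej : Rejects c s L) :
    ∃ L', L' ⊆ L ∧ L'.Infinite ∧ ∀ n ∈ L', Rejects c (insert n s) (L' ∩ Set.Ioi n) := by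
  classical
  -- one-step function
  have step : ∀ M : Set ℕ, M.Infinite → ∃ K, K ⊆ M ∩ Set.Ioi (sInf M) ∧ K.Infinite ∧
      (Accepts c (insert (sInf M) s) K ∨ Rejects c (insert (sInf M) s) K) := by
    intro M hM
    have hinf : (M ∩ Set.Ioi (sInf M)).Infinite := by
      have : M ∩ Set.Ioi (sInf M) = M \ (M ∩ Set.Iic (sInf M)) := by
        ext x; simp only [mem_inter_iff, mem_diff, mem_Ioi, mem_Iic, not_and, not_le]
        tauto
      rw [this]
      exact hM.diff (Set.finite_Iic _ |>.subset (Set.inter_subset_right))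
    exact decide_dichotomy _ _ hinf
  set F : Set ℕ → Set ℕ := fun M =>
    if h : M.Infinite then Classical.choose (step M h) else M with hF
  set M : ℕ → Set ℕ := fun i => F^[i] L with hMdef
  have hM0 : M 0 = L := rfl
  have hMsucc : ∀ i, M (i + 1) = F (M i) := by
    intro i
    simp only [hMdef, Function.iterate_succ_apply']
  -- basic invariants
  have key : ∀ i, (M i).Infinite ∧ M (i+1) ⊆ M i ∩ Set.Ioi (sInf (M i)) ∧
      (Accepts c (insert (sInf (M i)) s) (M (i+1)) ∨
       Rejects c (insert (sInf (M i)) s) (M (i+1))) := by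
    have inf : ∀ i, (M i).Infinite := by
      intro i
      induction i with
      | zero => exact hL
      | succ n ih =>
        rw [hMsucc, hF]
        simp only [ih, dif_pos]
        exact (Classical.choose_spec (step (M n) ih)).2.1
    intro i
    refine ⟨inf i, ?_, ?_⟩
    · have := Classical.choose_spec (step (M i) (inf i))
      rw [hMsucc, hF]; simp only [inf i, dif_pos]
      exact this.1
    · have := Classical.choose_spec (step (M i) (inf i))
      rw [hMsucc, hF]; simp only [inf i, dif_pos]
      exact this.2.2
  set e : ℕ → ℕ := fun i => sInf (M i) with he
  have heMem : ∀ i, e i ∈ M i := fun i => Nat.sInf_mem (Set.Infinite.nonempty (key i).1)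
  have hMMono : ∀ i j, i ≤ j → M j ⊆ M i := by
    intro i j hij
    induction j with
    | zero => rw [Nat.le_zero.mp hij]
    | succ n ih =>
      rcases Nat.lt_or_ge i (n+1) with h | h
      · exact ((key n).2.1.trans Set.inter_subset_left).trans (ih (Nat.lt_succ_iff.mp h))
      · rw [Nat.le_antisymm hij h]
  have heLt : ∀ i j, i < j → e i < e j := by
    intro i j hij
    have : e j ∈ M (i+1) := hMMono (i+1) j hij (heMem j)
    exact ((key i).2.1 this).2
  have heMono : StrictMono e := fun i j h => heLt i j h
  have heL : ∀ i, e i ∈ L := fun i => hMMono 0 i (Nat.zero_le i) (heMem i)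
  -- the set of accepting indices is finite
  set D : Set ℕ := {i | Accepts c (insert (e i) s) (M (i+1))} with hD
  have hDfin : ¬ D.Infinite := by
    intro hDinf
    apply hrej (e '' D) (fun x hx => by obtain ⟨i, _, rfl⟩ := hx; exact heL i)
      (hDinf.image (heMono.injective.injOn))
    -- e '' D accepts s
    intro K hK hKinf
    have hKne : K.Nonempty := hKinf.nonempty
    obtain ⟨i, hiD, hie⟩ : ∃ i ∈ D, e i = sInf K := by
      have : sInf K ∈ e '' D := hK (Nat.sInf_mem hKne)
      obtain ⟨i, h1, h2⟩ := this; exact ⟨i, h1, h2⟩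
    have hsub : K \ {e i} ⊆ M (i + 1) := by
      intro x hx
      obtain ⟨j, hjD, rfl⟩ := hK hx.1
      have : i < j := by
        apply heMono.lt_iff_lt.mp
        rcases lt_or_eq_of_le (hie ▸ Nat.sInf_le hx.1) with h | h
        · exact h
        · exact absurd h.symm hx.2
      exact hMMono (i+1) j this (heMem j)
    have hinf : (K \ {e i}).Infinite := hKinf.diff (Set.finite_singleton _)
    have := hiD (K \ {e i}) hsub hinf
    have heq : (↑(insert (e i) s) : Set ℕ) ∪ (K \ {e i}) = ↑s ∪ K := by
      ext x
      simp only [Finset.coe_insert, Set.mem_union, Set.mem_insert_iff, Set.mem_diff,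
        Set.mem_singleton_iff, Finset.mem_coe]
      constructor
      · rintro (⟨rfl | hx⟩ | ⟨hx, _⟩)
        · exact Or.inr (hie ▸ Nat.sInf_mem hKne)
        · exact Or.inl ‹_›
        · exact Or.inr hx
      · rintro (hx | hx)
        · exact Or.inl (Or.inr hx)
        · by_cases hxe : x = e i
          · exact Or.inl (Or.inl hxe)
          · exact Or.inr ⟨hx, hxe⟩
      
    rwa [heq] at this
  -- take the rejected part
  obtain ⟨i₀, hi₀⟩ : ∃ i₀, ∀ i, i ∈ D → i < i₀ := by
    rcases Set.not_infinite.mp hDfin |>.bddAbove with ⟨b, hb⟩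
    exact ⟨b + 1, fun i hi => Nat.lt_succ_of_le (hb hi)⟩
  refine ⟨e '' Set.Ici i₀, fun x hx => by obtain ⟨i, _, rfl⟩ := hx; exact heL i,
    Set.Infinite.image (heMono.injective.injOn) (Set.Ici_infinite i₀), ?_⟩
  rintro n ⟨i, hi, rfl⟩
  have hrejI : Rejects c (insert (e i) s) (M (i+1)) := by
    rcases (key i).2.2 with h | h
    · exact absurd (hi₀ i h) (not_lt.mpr hi)
    · exact h
  refine hrejI.mono ?_
  rintro x ⟨hx1, hx2⟩
  obtain ⟨j, hj, rfl⟩ := hx1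
  have hij : i < j := heMono.lt_iff_lt.mp hx2
  exact hMMono (i+1) j hij (heMem j)

end GPX

namespace GPX2
open GPX

/-- Diagonal lemma for a finite family of rejected sets. -/
lemma diagonal_family {c : Set ℕ → Bool} (S : Finset (Finset ℕ)) :
    ∀ L : Set ℕ, L.Infinite → (∀ s ∈ S, Rejects c s L) →
    ∃ L', L' ⊆ L ∧ L'.Infinite ∧
      ∀ s ∈ S, ∀ n ∈ L', Rejects c (insert n s) (L' ∩ Set.Ioi n) := by
  classical
  induction S using Finset.induction_on with
  | empty => exact fun L hL _ => ⟨L, subset_rfl, hL, by simp⟩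
  | insert s S hnotmem ih =>
    intro L hL hrej
    obtain ⟨L₁, hL₁sub, hL₁inf, hL₁⟩ := diagonal hL (hrej s (Finset.mem_insert_self s S))
    obtain ⟨L₂, hL₂sub, hL₂inf, hL₂⟩ := ih L₁ hL₁inf
      (fun t ht => (hrej t (Finset.mem_insert_of_mem ht)).mono hL₁sub)
    refine ⟨L₂, hL₂sub.trans hL₁sub, hL₂inf, ?_⟩
    intro t ht n hn
    rcases Finset.mem_insert.mp ht with rfl | ht'
    · exact (hL₁ n (hL₂sub hn)).mono (Set.inter_subset_inter_left _ hL₂sub)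
    · exact hL₂ t ht' n hn

/-- Fusion: if `∅` is rejected in `L`, there is `L* ⊆ L` such that every finite subset of
`L*` is rejected by the part of `L*` above it. -/
lemma fusion {c : Set ℕ → Bool} {L : Set ℕ} (hL : L.Infinite) (hrej : Rejects c ∅ L) :
    ∃ Lstar, Lstar ⊆ L ∧ Lstar.Infinite ∧
      ∀ s : Finset ℕ, ↑s ⊆ Lstar →
        Rejects c s {x ∈ Lstar | ∀ y ∈ s, y < x} := by
  classical
  set Inv : Finset ℕ × Set ℕ → Prop := fun p =>
    p.2 ⊆ L ∧ p.2.Infinite ∧ (∀ x ∈ p.1, ∀ y ∈ p.2, x < y) ∧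
      ∀ s ∈ p.1.powerset, Rejects c s p.2 with hInvDef
  have step : ∀ p, Inv p → ∃ q : Finset ℕ × Set ℕ, Inv q ∧ q.2 ⊆ p.2 ∧
      ∃ e, e ∈ p.2 ∧ q.1 = insert e p.1 ∧ (∀ y ∈ q.2, e < y) := by
    rintro ⟨E, M⟩ ⟨h1, h2, h3, h4⟩
    obtain ⟨L', hL'sub, hL'inf, hL'⟩ := diagonal_family E.powerset M h2 h4
    set e : ℕ := sInf L' with he
    have heMem : e ∈ L' := Nat.sInf_mem hL'inf.nonempty
    have htail : (L' ∩ Set.Ioi e).Infinite := by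
      have heq : L' ∩ Set.Ioi e = L' \ (L' ∩ Set.Iic e) := by
        ext x; simp only [Set.mem_inter_iff, Set.mem_diff, Set.mem_Ioi, Set.mem_Iic,
          not_and, not_le]
        tauto
      rw [heq]
      exact hL'inf.diff ((Set.finite_Iic _).subset Set.inter_subset_right)
    refine ⟨(insert e E, L' ∩ Set.Ioi e), ⟨?_, htail, ?_, ?_⟩,
      Set.inter_subset_left.trans hL'sub, e, hL'sub heMem, rfl, fun y hy => hy.2⟩
    · exact ((Set.inter_subset_left).trans hL'sub).trans h1
    · intro x hx y hy
      rcases Finset.mem_insert.mp hx with rfl | hx'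
      · exact hy.2
      · exact h3 x hx' y (hL'sub hy.1)
    · intro s hs
      simp only [Finset.mem_powerset] at hs
      by_cases hes : e ∈ s
      · have hsE : s.erase e ∈ E.powerset := by
          simp only [Finset.mem_powerset]
          intro x hx
          have hxe := Finset.mem_erase.mp hx
          rcases Finset.mem_insert.mp (hs hxe.2) with h | h
          · exact absurd h hxe.1
          · exact h
        have := hL' (s.erase e) hsE e heMem
        rwa [Finset.insert_erase hes] at this
      · have hsE : s ∈ E.powerset := by
          simp only [Finset.mem_powerset]
          intro x hx
          rcases Finset.mem_insert.mp (hs hx) with rfl | h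
          · exact absurd hx hes
          · exact h
        exact (h4 s hsE).mono (Set.inter_subset_left.trans hL'sub)
  set G : Finset ℕ × Set ℕ → Finset ℕ × Set ℕ := fun p =>
    if h : Inv p then Classical.choose (step p h) else p with hG
  set P : ℕ → Finset ℕ × Set ℕ := fun i => G^[i] (∅, L) with hP
  have hP0 : P 0 = (∅, L) := rfl
  have hPsucc : ∀ i, P (i+1) = G (P i) := fun i => Function.iterate_succ_apply' G i _
  have hInv0 : Inv (∅, L) := by
    refine ⟨subset_rfl, hL, by simp, ?_⟩
    intro s hs
    simp only [Finset.mem_powerset, Finset.subset_empty] at hs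
    subst hs; exact hrej
  have hInvAll : ∀ i, Inv (P i) := by
    intro i
    induction i with
    | zero => exact hInv0
    | succ n ih =>
      have hGeq : G (P n) = Classical.choose (step (P n) ih) := by
        rw [hG]; exact dif_pos ih
      rw [hPsucc, hGeq]
      exact (Classical.choose_spec (step (P n) ih)).1
  have hstep : ∀ i, (P (i+1)).2 ⊆ (P i).2 ∧
      ∃ e, e ∈ (P i).2 ∧ (P (i+1)).1 = insert e (P i).1 ∧ (∀ y ∈ (P (i+1)).2, e < y) := by
    intro i
    have hh := Classical.choose_spec (step (P i) (hInvAll i))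
    have hGeq : G (P i) = Classical.choose (step (P i) (hInvAll i)) := by
      rw [hG]; exact dif_pos (hInvAll i)
    rw [hPsucc, hGeq]
    exact ⟨hh.2.1, hh.2.2⟩
  set e : ℕ → ℕ := fun i => (hstep i).2.choose with he
  have heMem : ∀ i, e i ∈ (P i).2 := fun i => (hstep i).2.choose_spec.1
  have heIns : ∀ i, (P (i+1)).1 = insert (e i) (P i).1 := fun i => (hstep i).2.choose_spec.2.1
  have heLtTail : ∀ i, ∀ y ∈ (P (i+1)).2, e i < y := fun i => (hstep i).2.choose_spec.2.2
  have hMmono : ∀ i j, i ≤ j → (P j).2 ⊆ (P i).2 := by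
    intro i j hij
    induction j with
    | zero => rw [Nat.le_zero.mp hij]
    | succ n ih =>
      rcases Nat.lt_or_ge i (n+1) with h | h
      · exact (hstep n).1.trans (ih (Nat.lt_succ_iff.mp h))
      · rw [Nat.le_antisymm hij h]
  have heMono : StrictMono e := by
    have h1 : ∀ i j, i < j → e i < e j := by
      intro i j hij
      exact heLtTail i (e j) (hMmono (i+1) j hij (heMem j))
    exact fun i j h => h1 i j h
  have hE : ∀ i, (P i).1 = (Finset.range i).image e := by
    intro i
    induction i with
    | zero => simp [hP0]
    | succ n ih => rw [heIns, ih, Finset.range_add_one, Finset.image_insert]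
  have hML : ∀ i, (P i).2 ⊆ L := fun i => (hInvAll i).1
  have heL : ∀ i, e i ∈ L := fun i => hML i (heMem i)
  refine ⟨Set.range e, by rintro x ⟨i, rfl⟩; exact heL i,
    GPX.range_infinite heMono, ?_⟩
  intro s hs
  by_cases hsne : s.Nonempty
  · -- index of the max
    obtain ⟨r, hr⟩ : ∃ r, e r = s.max' hsne := hs (s.max'_mem hsne)
    have hsub : s ⊆ (P (r+1)).1 := by
      intro x hx
      obtain ⟨j, hj⟩ := hs hx
      have : j ≤ r := by
        apply heMono.le_iff_le.mp
        rw [hr, hj]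
        exact s.le_max' x hx
      rw [hE]
      exact Finset.mem_image.mpr ⟨j, Finset.mem_range.mpr (Nat.lt_succ_of_le this), hj⟩
    have hrej' : Rejects c s (P (r+1)).2 :=
      (hInvAll (r+1)).2.2.2 s (Finset.mem_powerset.mpr hsub)
    refine hrej'.mono ?_
    rintro x ⟨⟨j, rfl⟩, hx2⟩
    have hjr : r < j := by
      apply heMono.lt_iff_lt.mp
      rw [hr]
      exact hx2 _ (s.max'_mem hsne)
    exact hMmono (r+1) j hjr (heMem j)
  · rw [Finset.not_nonempty_iff_eq_empty.mp hsne]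
    refine hrej.mono ?_
    rintro x ⟨⟨j, rfl⟩, _⟩
    exact heL j

end GPX2

namespace GPX3
open GPX GPX2

/-- A coloring of infinite subsets that is determined by finite initial segments. -/
def Determined {Γ : Type*} (c : Set ℕ → Γ) : Prop :=
  ∀ K : Set ℕ, K.Infinite → ∃ P : ℕ, ∀ K' : Set ℕ, K'.Infinite →
    (∀ p ≤ P, Nat.nth (· ∈ K') p = Nat.nth (· ∈ K) p) → c K' = c K

lemma setOf_infinite {K : Set ℕ} (h : K.Infinite) : {x | x ∈ K}.Infinite := h

theorem gp_bool {c : Set ℕ → Bool} (hdet : Determined c) {L : Set ℕ} (hL : L.Infinite) :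
    ∃ L', L' ⊆ L ∧ L'.Infinite ∧ ∃ b, ∀ K, K ⊆ L' → K.Infinite → c K = b := by
  classical
  by_cases hacc : ∃ K, K ⊆ L ∧ K.Infinite ∧ Accepts c ∅ K
  · obtain ⟨K, hKL, hKinf, hKacc⟩ := hacc
    refine ⟨K, hKL, hKinf, true, ?_⟩
    intro K' hK' hK'inf
    have := hKacc K' hK' hK'inf
    simpa using this
  · have hrej : Rejects c ∅ L := by
      intro K hK hKinf hKacc
      exact hacc ⟨K, hK, hKinf, hKacc⟩
    obtain ⟨Lstar, hLsub, hLsinf, hLs⟩ := fusion hL hrej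
    refine ⟨Lstar, hLsub, hLsinf, false, ?_⟩
    intro K hK hKinf
    by_contra hcK
    have hcK : c K = true := by simpa using hcK
    obtain ⟨P, hP⟩ := hdet K hKinf
    set f : ℕ → ℕ := Nat.nth (· ∈ K) with hf
    have hfmono : StrictMono f := Nat.nth_strictMono (setOf_infinite hKinf)
    have hfmem : ∀ p, f p ∈ K := fun p => Nat.nth_mem_of_infinite (setOf_infinite hKinf) p
    set s : Finset ℕ := (Finset.range (P+1)).image f with hs
    have hssub : ↑s ⊆ Lstar := by
      intro x hx
      obtain ⟨p, _, rfl⟩ := Finset.mem_image.mp hx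
      exact hK (hfmem p)
    have hrej' := hLs s hssub
    set T : Set ℕ := {x ∈ K | f P < x} with hT
    have hTinf : T.Infinite := by
      have : T = K \ (K ∩ Set.Iic (f P)) := by
        ext x
        simp only [hT, Set.mem_setOf_eq, Set.mem_diff, Set.mem_inter_iff, Set.mem_Iic,
          not_and, not_le]
        tauto
      rw [this]
      exact hKinf.diff ((Set.finite_Iic _).subset Set.inter_subset_right)
    have hTsub : T ⊆ {x ∈ Lstar | ∀ y ∈ s, y < x} := by
      rintro x ⟨hx1, hx2⟩
      refine ⟨hK hx1, ?_⟩
      intro y hy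
      obtain ⟨p, hp, rfl⟩ := Finset.mem_image.mp hy
      exact lt_of_le_of_lt (hfmono.monotone (Nat.lt_succ_iff.mp (Finset.mem_range.mp hp))) hx2
    have hnacc : ¬ Accepts c s T := hrej' T hTsub hTinf
    rw [Accepts] at hnacc
    push_neg at hnacc
    obtain ⟨K', hK'T, hK'inf, hcne⟩ := hnacc
    -- build the enumeration of ↑s ∪ K'
    set g : ℕ → ℕ := fun p => if p ≤ P then f p else Nat.nth (· ∈ K') (p - (P+1)) with hg
    have hK'gt : ∀ x ∈ K', f P < x := fun x hx => (hK'T hx).2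
    have hnthK'mem : ∀ q, Nat.nth (· ∈ K') q ∈ K' :=
      fun q => Nat.nth_mem_of_infinite (setOf_infinite hK'inf) q
    have hgmono : StrictMono g := by
      intro a b hab
      simp only [hg]
      rcases le_or_gt b P with hbP | hbP
      · rw [if_pos (hab.le.trans hbP), if_pos hbP]
        exact hfmono hab
      · rw [if_neg (not_le.mpr hbP)]
        rcases le_or_gt a P with haP | haP
        · rw [if_pos haP]
          exact lt_of_le_of_lt (hfmono.monotone haP) (hK'gt _ (hnthK'mem _))
        · rw [if_neg (not_le.mpr haP)]
          exact Nat.nth_strictMono (setOf_infinite hK'inf) (by omega)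
    have hrange : Set.range g = ↑s ∪ K' := by
      ext x
      constructor
      · rintro ⟨p, rfl⟩
        simp only [hg]
        split_ifs with h
        · exact Or.inl (Finset.mem_coe.mpr (Finset.mem_image.mpr
            ⟨p, Finset.mem_range.mpr (Nat.lt_succ_of_le h), rfl⟩))
        · exact Or.inr (hnthK'mem _)
      · rintro (hx | hx)
        · obtain ⟨p, hp, rfl⟩ := Finset.mem_image.mp (Finset.mem_coe.mp hx)
          exact ⟨p, by simp [hg, Nat.lt_succ_iff.mp (Finset.mem_range.mp hp)]⟩
        · obtain ⟨q, hq⟩ := Nat.subset_range_nth (p := (· ∈ K')) hx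
          refine ⟨q + (P+1), ?_⟩
          simp only [hg, if_neg (by omega : ¬ q + (P+1) ≤ P)]
          rw [Nat.add_sub_cancel]
          exact hq
    have hprefix : ∀ p ≤ P, Nat.nth (· ∈ Set.range g) p = Nat.nth (· ∈ K) p := by
      intro p hp
      rw [GPX.nth_range hgmono]
      simp [hg, hp, hf]
    have := hP (Set.range g) (GPX.range_infinite hgmono) hprefix
    rw [hrange] at this
    rw [this] at hcne
    exact hcne hcK

theorem gp_list {Γ : Type*} {c : Set ℕ → Γ} (hdet : Determined c) :
    ∀ (cs : List Γ) (L : Set ℕ), L.Infinite → (∀ K, K ⊆ L → K.Infinite → c K ∈ cs) →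
    ∃ L', L' ⊆ L ∧ L'.Infinite ∧ ∃ γ, ∀ K, K ⊆ L' → K.Infinite → c K = γ := by
  classical
  intro cs
  induction cs with
  | nil =>
    intro L hL hmem
    exact absurd (hmem L subset_rfl hL) List.not_mem_nil
  | cons γ rest ih =>
    intro L hL hmem
    set c' : Set ℕ → Bool := fun K => decide (c K = γ) with hc'
    have hdet' : Determined c' := by
      intro K hK
      obtain ⟨P, hP⟩ := hdet K hK
      exact ⟨P, fun K' h1 h2 => by simp only [hc', hP K' h1 h2]⟩
    obtain ⟨L', h1, h2, b, hb⟩ := gp_bool hdet' hL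
    cases b with
    | true =>
      refine ⟨L', h1, h2, γ, ?_⟩
      intro K hK hKinf
      have := hb K hK hKinf
      simpa [hc'] using this
    | false =>
      have hside : ∀ K, K ⊆ L' → K.Infinite → c K ∈ rest := by
        intro K hK hKinf
        have hne : c K ≠ γ := by
          have := hb K hK hKinf
          simpa [hc'] using this
        have := hmem K (hK.trans h1) hKinf
        simpa [hne] using this
      obtain ⟨L'', hh1, hh2, γ', hγ'⟩ := ih L' h2 hside
      exact ⟨L'', hh1.trans h1, hh2, γ', hγ'⟩

end GPX3


section Dev
namespace HOSM

open Set

-- ## elt API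
lemma length_sort (s : Finset ℕ) : (s.sort (· ≤ ·)).length = s.card := Finset.length_sort _

lemma elt_eq_get (s : Finset ℕ) {m : ℕ} (h : m < s.card) :
    elt s m = (s.sort (· ≤ ·)).get ⟨m, by rwa [length_sort]⟩ := by
  rw [elt, List.getD_eq_getElem _ _ (by rwa [length_sort])]
  simp

lemma elt_mem {s : Finset ℕ} {m : ℕ} (h : m < s.card) : elt s m ∈ s := by
  rw [elt_eq_get s h, ← Finset.mem_sort (· ≤ ·)]
  exact List.get_mem _ _


lemma elt_lt_elt {s : Finset ℕ} {m n : ℕ} (hmn : m < n) (h : n < s.card) :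
    elt s m < elt s n := by
  rw [elt_eq_get s (hmn.trans h), elt_eq_get s h]
  have hs : (s.sort (· ≤ ·)).SortedLT := Finset.sortedLT_sort s
  exact List.SortedLT.strictMono_get hs (by simpa using hmn)

lemma elt_le_elt {s : Finset ℕ} {m n : ℕ} (hmn : m ≤ n) (h : n < s.card) :
    elt s m ≤ elt s n := by
  rcases lt_or_eq_of_le hmn with h' | rfl
  · exact (elt_lt_elt h' h).le
  · rfl

lemma mem_iff_elt {s : Finset ℕ} {x : ℕ} : x ∈ s ↔ ∃ m, m < s.card ∧ elt s m = x := by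
  constructor
  · intro hx
    have : x ∈ s.sort (· ≤ ·) := (Finset.mem_sort _).mpr hx
    obtain ⟨⟨m, hm⟩, hget⟩ := List.get_of_mem this
    exact ⟨m, by rwa [length_sort] at hm, by rw [elt_eq_get s (by rwa [length_sort] at hm)]; exact hget⟩
  · rintro ⟨m, hm, rfl⟩
    exact elt_mem hm

/-- A finite set `u` matches the first `u.card` values of `f`. -/
def Matches (u : Finset ℕ) (f : ℕ → ℕ) : Prop := ∀ m, m < u.card → elt u m = f m

lemma matches_eq_image {u : Finset ℕ} {f : ℕ → ℕ} (h : Matches u f) :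
    u = (Finset.range u.card).image f := by
  ext x
  constructor
  · intro hx
    obtain ⟨m, hm, rfl⟩ := mem_iff_elt.mp hx
    exact Finset.mem_image.mpr ⟨m, Finset.mem_range.mpr hm, (h m hm).symm⟩
  · intro hx
    obtain ⟨m, hm, rfl⟩ := Finset.mem_image.mp hx
    rw [← h m (Finset.mem_range.mp hm)]
    exact elt_mem (Finset.mem_range.mp hm)

lemma initSeg_of_matches {u v : Finset ℕ} {f : ℕ → ℕ} (hf : StrictMono f)
    (hu : Matches u f) (hv : Matches v f) (hcard : u.card ≤ v.card) : InitSeg u v := by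
  constructor
  · intro x hx
    obtain ⟨m, hm, rfl⟩ := mem_iff_elt.mp hx
    rw [hu m hm, ← hv m (lt_of_lt_of_le hm hcard)]
    exact elt_mem (lt_of_lt_of_le hm hcard)
  · intro a ha b hb hab
    obtain ⟨m, hm, rfl⟩ := mem_iff_elt.mp ha
    obtain ⟨m', hm', rfl⟩ := mem_iff_elt.mp hb
    rw [hv m hm] at hab ⊢
    rw [hu m' hm'] at hab
    have hmm : m ≤ m' := hf.le_iff_le.mp hab
    rw [← hu m (lt_of_le_of_lt hmm hm')]
    exact elt_mem (lt_of_le_of_lt hmm hm')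

lemma thin_unique {F : Set (Finset ℕ)} (hthin : Thin F) {u v : Finset ℕ}
    (hu : u ∈ F) (hv : v ∈ F) {f : ℕ → ℕ} (hf : StrictMono f)
    (hmu : Matches u f) (hmv : Matches v f) : u = v := by
  rcases lt_trichotomy u.card v.card with h | h | h
  · refine absurd ?_ (hthin v hv u hu)
    refine ⟨initSeg_of_matches hf hmu hmv h.le, ?_⟩
    intro he; rw [he] at h; exact lt_irrefl _ h
  · rw [matches_eq_image hmu, matches_eq_image hmv, h]
  · refine absurd ?_ (hthin u hu v hv)
    refine ⟨initSeg_of_matches hf hmv hmu h.le, ?_⟩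
    intro he; rw [he] at h; exact lt_irrefl _ h

lemma self_mem_hat {F : Set (Finset ℕ)} {s : Finset ℕ} (h : s ∈ F) : s ∈ hat F :=
  ⟨s, h, subset_rfl, fun a ha _ _ _ => ha⟩

/-- Compactness: along a strictly monotone sequence, some finite prefix leaves `F̂`. -/
lemma exists_prefix_not_hat {F : Set (Finset ℕ)} (hcl : IsClosed (chi '' hat F))
    {f : ℕ → ℕ} (hf : StrictMono f) :
    ∃ r, (Finset.range r).image f ∉ hat F := by
  classical
  by_contra h
  push_neg at h
  set g : ℕ → Bool := fun n => decide (n ∈ Set.range f) with hg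
  have htend : Filter.Tendsto (fun r => chi ((Finset.range r).image f))
      Filter.atTop (nhds g) := by
    rw [tendsto_pi_nhds]
    intro n
    apply tendsto_nhds_of_eventually_eq
    by_cases hn : n ∈ Set.range f
    · obtain ⟨m, rfl⟩ := hn
      filter_upwards [Filter.eventually_ge_atTop (m+1)] with r hr
      have h1 : f m ∈ (Finset.range r).image f :=
        Finset.mem_image.mpr ⟨m, Finset.mem_range.mpr (by omega), rfl⟩
      simp only [chi, hg, h1, decide_eq_true_eq]
      simp [Set.mem_range]
    · apply Filter.Eventually.of_forall
      intro r
      have h1 : n ∉ (Finset.range r).image f := by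
        intro hc
        obtain ⟨m, _, hm⟩ := Finset.mem_image.mp hc
        exact hn ⟨m, hm⟩
      simp only [chi, hg, h1, hn]
  have hmem : g ∈ chi '' hat F :=
    hcl.mem_of_tendsto htend (Filter.Eventually.of_forall (fun r => ⟨_, h r, rfl⟩))
  obtain ⟨u, _, hug⟩ := hmem
  have hsub : Set.range f ⊆ ↑u := by
    intro n hn
    have := congrFun hug n
    simp only [chi, hg, hn, decide_eq_true_eq] at this
    have : decide (n ∈ u) = true := by rw [this]; simp [hn]
    simpa using this
  exact absurd (u.finite_toSet.subset hsub) (Set.infinite_range_of_injective hf.injective)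

/-! ### The decode coloring -/

lemma slot_le {k m R i : ℕ} (hm : m < R) (hi : i < k) : 2*k*m + i ≤ 2*k*R :=
  calc 2*k*m + i ≤ 2*k*m + 2*k := Nat.add_le_add_left (by omega) _
    _ = 2*k*(m+1) := by ring
    _ ≤ 2*k*R := Nat.mul_le_mul_left _ hm

/-- Witness: `t` is a tuple of members of `F` matching the decode positions of `K`. -/
def Wit (F : Set (Finset ℕ)) (k : ℕ) (K : Set ℕ) (t : Fin k → Finset ℕ) : Prop :=
  ∀ i : Fin k, t i ∈ F ∧ Matches (t i) (fun m => Nat.nth (· ∈ K) (2*k*m + i.val))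

lemma decode_mono {k : ℕ} {K : Set ℕ} (hK : K.Infinite) (i : Fin k) :
    StrictMono (fun m => Nat.nth (· ∈ K) (2*k*m + i.val)) := by
  intro a b hab
  apply Nat.nth_strictMono hK
  have h2k : 0 < 2*k := by have := i.isLt; omega
  exact Nat.add_lt_add_right ((Nat.mul_lt_mul_left h2k).mpr hab) _

lemma wit_unique {F : Set (Finset ℕ)} (hthin : Thin F) {k : ℕ} {K : Set ℕ}
    (hK : K.Infinite) {t t' : Fin k → Finset ℕ}
    (h : Wit F k K t) (h' : Wit F k K t') : t = t' :=
  funext fun i => thin_unique hthin (h i).1 (h' i).1 (decode_mono hK i) (h i).2 (h' i).2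

open scoped Classical in
noncomputable def col {Γ : Type*} [Inhabited Γ] (F : Set (Finset ℕ)) (k : ℕ)
    (ψ : (Fin k → Finset ℕ) → Γ) (K : Set ℕ) : Γ :=
  if h : ∃ t, Wit F k K t then ψ h.choose else default

lemma col_eq_of_wit {Γ : Type*} [Inhabited Γ] {F : Set (Finset ℕ)} (hthin : Thin F)
    {k : ℕ} (ψ : (Fin k → Finset ℕ) → Γ) {K : Set ℕ} (hK : K.Infinite)
    {t : Fin k → Finset ℕ} (ht : Wit F k K t) : col F k ψ K = ψ t := by
  rw [col, dif_pos ⟨t, ht⟩]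
  congr 1
  exact wit_unique hthin hK (Exists.choose_spec (⟨t, ht⟩ : ∃ t, Wit F k K t)) ht

lemma col_determined {Γ : Type*} [Inhabited Γ] {F : Set (Finset ℕ)} (hF : RegularThin F)
    {k : ℕ} (hk : 1 ≤ k) (ψ : (Fin k → Finset ℕ) → Γ) :
    GPX3.Determined (col F k ψ) := by
  intro K hK
  by_cases hw : ∃ t, Wit F k K t
  · obtain ⟨t, ht⟩ := hw
    set R := (Finset.univ.sup fun i : Fin k => (t i).card) + 1 with hR
    refine ⟨2*k*R, ?_⟩
    intro K' hK' hagree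
    have ht' : Wit F k K' t := by
      intro i
      refine ⟨(ht i).1, fun m hm => ?_⟩
      have hmR : m < R := by
        have hle := Finset.le_sup (f := fun i : Fin k => (t i).card) (Finset.mem_univ i)
        omega
      show elt (t i) m = Nat.nth (· ∈ K') (2*k*m + i.val)
      rw [hagree _ (slot_le hmR i.isLt)]
      exact (ht i).2 m hm
    rw [col_eq_of_wit hF.1 ψ hK' ht', col_eq_of_wit hF.1 ψ hK ht]
  · have hcl : IsClosed (chi '' hat F) := hF.2.1
    have hher : Hereditary (hat F) := hF.2.2.1
    set f : Fin k → ℕ → ℕ := fun i m => Nat.nth (· ∈ K) (2*k*m + i.val) with hf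
    have hex : ∀ i : Fin k, ∃ r, (Finset.range r).image (f i) ∉ hat F :=
      fun i => exists_prefix_not_hat hcl (decode_mono hK i)
    choose r hr using hex
    set R := (Finset.univ.sup r) + 1 with hR
    refine ⟨2*k*R, ?_⟩
    intro K' hK' hagree
    have hiR : ∀ i : Fin k, r i < R := by
      intro i
      have := Finset.le_sup (f := r) (Finset.mem_univ i)
      omega
    have hnw' : ¬ ∃ t, Wit F k K' t := by
      rintro ⟨t, ht⟩
      have hcard : ∀ i, (t i).card < r i := by
        intro i
        by_contra hc
        push_neg at hc
        apply hr i
        have hsub : (Finset.range (r i)).image (f i) ⊆ t i := by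
          intro y hy
          obtain ⟨m, hm, rfl⟩ := Finset.mem_image.mp hy
          have hm' : m < (t i).card := lt_of_lt_of_le (Finset.mem_range.mp hm) hc
          have h1 := (ht i).2 m hm'
          simp only [] at h1
          have heq : elt (t i) m = f i m := by
            rw [h1]
            exact hagree _ (slot_le (lt_trans (Finset.mem_range.mp hm) (hiR i)) i.isLt)
          exact heq ▸ elt_mem hm'
        exact hher (t i) (self_mem_hat (ht i).1) _ hsub
      apply hw
      refine ⟨t, fun i => ⟨(ht i).1, fun m hm => ?_⟩⟩
      have h1 := (ht i).2 m hm
      simp only [] at h1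
      show elt (t i) m = Nat.nth (· ∈ K) (2*k*m + i.val)
      rw [← hagree _ (slot_le (lt_trans (lt_of_lt_of_le hm (hcard i).le) (hiR i)) i.isLt)]
      exact h1
    rw [col, dif_neg hnw', col, dif_neg hw]


end HOSM
end Dev

section EncDev
namespace HOSM
open Set

open scoped Classical in
noncomputable def sidx (S : Set ℕ) (x : ℕ) : ℕ := Nat.count (· ∈ S) x

lemma nth_sidx {S : Set ℕ} {x : ℕ} (hx : x ∈ S) : Nat.nth (· ∈ S) (sidx S x) = x := by
  classical
  exact Nat.nth_count hx

lemma sidx_mono {S : Set ℕ} {a b : ℕ} (h : a ≤ b) : sidx S a ≤ sidx S b := by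
  classical
  exact Nat.count_monotone _ h

lemma slot_mod {k m i : ℕ} (hk : 0 < k) (hi : i < 2*k) : (2*k*m + i) % (2*k) = i := by
  rw [Nat.add_comm, Nat.add_mul_mod_self_left, Nat.mod_eq_of_lt hi]

lemma slot_div {k m i : ℕ} (hk : 0 < k) (hi : i < 2*k) : (2*k*m + i) / (2*k) = m := by
  rw [Nat.add_comm, Nat.add_mul_div_left _ _ (by omega : 0 < 2*k), Nat.div_eq_of_lt hi]
  omega

/-- **Encoding lemma**: every plegma tuple with members from a sparse-in-`S` set `μ`
is realized on the decode positions of some infinite subset of `S`. -/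
lemma encode {S : Set ℕ} (hS : S.Infinite) {k l : ℕ} (hk : 1 ≤ k) (hkl : k ≤ l)
    {μ : ℕ → ℕ} (hμ : StrictMono μ)
    (hgap : ∀ j, l ≤ j → sidx S (μ j) + 5*(l+1) ≤ sidx S (μ (j+1)))
    (hμS : ∀ j, l ≤ j → μ j ∈ S)
    (s : Fin k → Finset ℕ) (hne : ∀ i, (s i).Nonempty) (hple : IsPlegma s)
    (htuple : ∀ i : Fin k, ∀ m, m < (s i).card → ∃ j, l ≤ j ∧ elt (s i) m = μ j) :
    ∃ K : Set ℕ, K ⊆ S ∧ K.Infinite ∧ ∀ i : Fin k, ∀ m, m < (s i).card →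
      Nat.nth (· ∈ K) (2*k*m + i.val) = elt (s i) m := by
  classical
  set sI : ℕ → Finset ℕ := fun i => if h : i < k then s ⟨i, h⟩ else ∅ with hsI
  set forced : ℕ → Prop := fun p => p / (2*k) < (sI (p % (2*k))).card with hforced
  set fval : ℕ → ℕ := fun p => elt (sI (p % (2*k))) (p / (2*k)) with hfval
  set cidx : ℕ → ℕ := fun p => sidx S (fval p) with hcidx
  have hmodlt : ∀ p, forced p → p % (2*k) < k := by
    intro p hp
    by_contra hc
    push_neg at hc
    rw [hforced] at hp
    simp only [hsI, dif_neg (not_lt.mpr hc), Finset.card_empty] at hp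
    exact Nat.not_lt_zero _ hp
  -- decomposition of a forced slot
  have hdecomp : ∀ p, forced p →
      ∃ (i : ℕ) (hi : i < k) (m : ℕ), p = 2*k*m + i ∧ m < (s ⟨i, hi⟩).card ∧
        fval p = elt (s ⟨i, hi⟩) m := by
    intro p hp
    have hi := hmodlt p hp
    refine ⟨p % (2*k), hi, p / (2*k), (Nat.div_add_mod p (2*k)).symm, ?_, ?_⟩
    · have := hp
      rw [hforced] at this
      simpa only [hsI, dif_pos hi] using this
    · rw [hfval]
      simp only [hsI, dif_pos hi]
  have hforced_slot : ∀ (i : ℕ) (hi : i < k) (m : ℕ), m < (s ⟨i, hi⟩).card →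
      forced (2*k*m + i) ∧ fval (2*k*m + i) = elt (s ⟨i, hi⟩) m := by
    intro i hi m hm
    have h1 : (2*k*m + i) % (2*k) = i := slot_mod (by omega) (by omega)
    have h2 : (2*k*m + i) / (2*k) = m := slot_div (by omega) (by omega)
    constructor
    · rw [hforced]
      simp only [h1, h2, hsI, dif_pos hi]
      exact hm
    · rw [hfval]
      simp only [h1, h2, hsI, dif_pos hi]
  -- values increase along forced slots
  have hVAL : ∀ p q, p < q → forced p → forced q → fval p < fval q := by
    intro p q hpq hp hq
    obtain ⟨i, hi, m, rfl, hm, heq⟩ := hdecomp p hp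
    obtain ⟨i', hi', m', rfl, hm', heq'⟩ := hdecomp q hq
    rw [heq, heq']
    have hcases : m < m' ∨ (m = m' ∧ i < i') := by
      rcases lt_trichotomy m m' with h | h | h
      · exact Or.inl h
      · subst h; omega
      · exfalso
        have : 2*k*m' + 2*k ≤ 2*k*m := by
          have : m' + 1 ≤ m := h
          calc 2*k*m' + 2*k = 2*k*(m'+1) := by ring
            _ ≤ 2*k*m := Nat.mul_le_mul_left _ this
        omega
    rcases hcases with h | ⟨rfl, h⟩
    · -- different rounds: use plegma (ii) then monotonicity
      have h1 : elt (s ⟨i, hi⟩) m < elt (s ⟨i', hi'⟩) (m+1) := by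
        apply hple.2.2 ⟨i, hi⟩ ⟨i', hi'⟩ m hm
        omega
      exact lt_of_lt_of_le h1 (elt_le_elt (by omega) hm')
    · -- same round: plegma (i)
      exact hple.2.1 ⟨i, hi⟩ ⟨i', hi'⟩ (by simpa using h) m hm hm'
  -- each forced value is some μ j with j ≥ l
  have hJOF : ∀ p, forced p → ∃ j, l ≤ j ∧ fval p = μ j := by
    intro p hp
    obtain ⟨i, hi, m, rfl, hm, heq⟩ := hdecomp _ hp
    obtain ⟨j, hj, hj'⟩ := htuple ⟨i, hi⟩ m hm
    exact ⟨j, hj, heq ▸ hj'⟩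
  -- index gain between forced slots
  have hIDX : ∀ p q, forced p → forced q → fval p < fval q →
      cidx p + 5*(l+1) ≤ cidx q := by
    intro p q hp hq hlt
    obtain ⟨jp, hjp, hjpe⟩ := hJOF p hp
    obtain ⟨jq, hjq, hjqe⟩ := hJOF q hq
    have hjj : jp < jq := hμ.lt_iff_lt.mp (by rw [← hjpe, ← hjqe]; exact hlt)
    have e1 : cidx p = sidx S (μ jp) := by simp only [hcidx]; rw [hjpe]
    have e2 : cidx q = sidx S (μ jq) := by simp only [hcidx]; rw [hjqe]
    calc cidx p + 5*(l+1) = sidx S (μ jp) + 5*(l+1) := by rw [e1]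
      _ ≤ sidx S (μ (jp+1)) := hgap jp hjp
      _ ≤ sidx S (μ jq) := sidx_mono (hμ.monotone hjj)
      _ = cidx q := e2.symm
  -- a forced slot exists not too far after any forced slot (given one exists)
  have hNF : ∀ p q₀, forced p → forced q₀ → p < q₀ →
      ∃ q, p < q ∧ q ≤ p + 3*k ∧ forced q := by
    intro p q₀ hp hq₀ hpq₀
    obtain ⟨i, hi, m, rfl, hm, -⟩ := hdecomp p hp
    by_cases hA : ∃ i', i < i' ∧ ∃ hi' : i' < k, m < (s ⟨i', hi'⟩).card
    · obtain ⟨i', hii', hi', hm'⟩ := hA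
      exact ⟨2*k*m + i', by omega, by omega, (hforced_slot i' hi' m hm').1⟩
    · push_neg at hA
      obtain ⟨i₀, hi₀, m₀, rfl, hm₀, -⟩ := hdecomp q₀ hq₀
      have hmm₀ : m ≤ m₀ := by
        by_contra hc
        push_neg at hc
        have : 2*k*m₀ + 2*k ≤ 2*k*m := by
          calc 2*k*m₀ + 2*k = 2*k*(m₀+1) := by ring
            _ ≤ 2*k*m := Nat.mul_le_mul_left _ hc
        omega
      have hmne : m ≠ m₀ := by
        rintro rfl
        have hii₀ : i < i₀ := by omega
        have := hA i₀ hii₀ hi₀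
        omega
      have hm1 : m + 1 ≤ m₀ := by omega
      have halive : m + 1 < (s ⟨i₀, hi₀⟩).card := lt_of_le_of_lt (by omega) hm₀
      have hexp : 2*k*(m+1) = 2*k*m + 2*k := by ring
      exact ⟨2*k*(m+1) + i₀, by omega, by omega, (hforced_slot i₀ hi₀ (m+1) halive).1⟩
  -- base accumulation: no forced slot strictly between
  have hBASE : ∀ p q, p < q → forced p → forced q →
      (∀ r, p < r → r < q → ¬ forced r) → cidx p + (q - p) ≤ cidx q := by
    intro p q hpq hp hq hno
    obtain ⟨q', hq'1, hq'2, hq'3⟩ := hNF p q hp hq hpq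
    have hqle : q ≤ p + 3*k := by
      rcases lt_trichotomy q' q with h | h | h
      · exact absurd hq'3 (hno q' hq'1 h)
      · omega
      · omega
    have := hIDX p q hp hq (hVAL p q hpq hp hq)
    have h3k : 3*k ≤ 5*(l+1) := by omega
    omega
  -- accumulation along forced slots
  have hU : ∀ q, forced q → ∀ p, p < q → forced p → cidx p + (q - p) ≤ cidx q := by
    intro q
    induction q using Nat.strong_induction_on with
    | _ q ih =>
      intro hq p hpq hp
      by_cases hbet : ∃ r, p < r ∧ r < q ∧ forced r
      · set r := Nat.findGreatest (fun r => p < r ∧ r < q ∧ forced r) q with hr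
        obtain ⟨r₀, hr₁, hr₂, hr₃⟩ := hbet
        have hPr₀ : p < r₀ ∧ r₀ < q ∧ forced r₀ := ⟨hr₁, hr₂, hr₃⟩
        have hrspec : p < r ∧ r < q ∧ forced r :=
          Nat.findGreatest_spec (P := fun r => p < r ∧ r < q ∧ forced r)
            (le_of_lt hr₂) hPr₀
        have hrmax : ∀ r', r < r' → r' < q → ¬ forced r' := by
          intro r' h1 h2 hf
          exact Nat.findGreatest_is_greatest h1 (by omega) ⟨by omega, h2, hf⟩
        have h1 : cidx p + (r - p) ≤ cidx r := ih r hrspec.2.1 hrspec.2.2 p hrspec.1 hp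
        have h2 : cidx r + (q - r) ≤ cidx q := hBASE r q hrspec.2.1 hrspec.2.2 hq hrmax
        omega
      · push_neg at hbet
        exact hBASE p q hpq hp hq (fun r h1 h2 => hbet r h1 h2)
  -- the index function
  set d : ℕ → ℕ := fun p => Nat.rec (cidx 0) (fun n dn => if forced (n+1) then cidx (n+1) else dn + 1) p with hd
  have hd0 : d 0 = cidx 0 := rfl
  have hdsucc : ∀ n, d (n+1) = if forced (n+1) then cidx (n+1) else d n + 1 := fun n => rfl
  have hforced0 : forced 0 := by
    have h0 : (0:ℕ) < k := hk
    have h2 := (hforced_slot 0 h0 0 (Finset.card_pos.mpr (hne ⟨0, h0⟩))).1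
    have h00 : 2*k*0 + 0 = 0 := by ring
    rwa [h00] at h2
  have hdforced : ∀ p, forced p → d p = cidx p := by
    intro p hp
    cases p with
    | zero => exact hd0
    | succ n => rw [hdsucc, if_pos hp]
  have hV : ∀ p q, p < q → forced q → d p + (q - p) ≤ cidx q := by
    intro p
    induction p with
    | zero =>
      intro q hq hfq
      rw [hd0]
      have := hU q hfq 0 hq hforced0
      omega
    | succ n ihn =>
      intro q hq hfq
      by_cases hf : forced (n+1)
      · rw [hdforced _ hf]
        have := hU q hfq (n+1) hq hf
        omega
      · rw [hdsucc, if_neg hf]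
        have := ihn q (by omega) hfq
        omega
  have hdmono : StrictMono d := by
    apply strictMono_nat_of_lt_succ
    intro p
    by_cases hf : forced (p+1)
    · rw [hdsucc, if_pos hf]
      have := hV p (p+1) (by omega) hf
      omega
    · rw [hdsucc, if_neg hf]
      omega
  -- the final set
  set g : ℕ → ℕ := fun p => Nat.nth (· ∈ S) (d p) with hg
  have hgmono : StrictMono g := fun a b hab => Nat.nth_strictMono hS (hdmono hab)
  refine ⟨Set.range g, ?_, Set.infinite_range_of_injective hgmono.injective, ?_⟩
  · rintro x ⟨p, rfl⟩
    exact Nat.nth_mem_of_infinite hS (d p)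
  · intro i m hm
    have hm' : m < (s ⟨i.val, i.isLt⟩).card := hm
    obtain ⟨hfp, hfv⟩ := hforced_slot i.val i.isLt m hm'
    rw [GPX.nth_range hgmono, hg]
    simp only []
    rw [hdforced _ hfp, hcidx]
    have hmem : fval (2*k*m + i.val) ∈ S := by
      obtain ⟨j, hj, hje⟩ := hJOF _ hfp
      rw [hje]
      exact hμS j hj
    rw [nth_sidx hmem, hfv]

end HOSM
end EncDev


section FusionDev
namespace HOSM
open Set

theorem gp_fin {Γ : Type*} [Fintype Γ] {c : Set ℕ → Γ} (hdet : GPX3.Determined c)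
    {L : Set ℕ} (hL : L.Infinite) :
    ∃ L', L' ⊆ L ∧ L'.Infinite ∧ ∃ γ, ∀ K, K ⊆ L' → K.Infinite → c K = γ :=
  GPX3.gp_list hdet Finset.univ.toList L hL
    (fun _ _ _ => Finset.mem_toList.mpr (Finset.mem_univ _))

lemma sidx_gap {S T : Set ℕ} (hT : T.Infinite) (hTS : T ⊆ S) {u w : ℕ} {N : ℕ}
    (hN : 0 < N)
    (hu : ∀ r, r < N → u ≤ Nat.nth (· ∈ T) r)
    (hw : ∀ r, r < N → Nat.nth (· ∈ T) r < w) :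
    sidx S u + N ≤ sidx S w := by
  classical
  have huw : u < w := lt_of_le_of_lt (hu 0 hN) (hw 0 hN)
  have hcount : ∀ v : ℕ, sidx S v = ((Finset.range v).filter (· ∈ S)).card := by
    intro v
    rw [sidx, Nat.count_eq_card_filter_range]
  set A₁ : Finset ℕ := (Finset.range u).filter (· ∈ S) with hA₁
  set A₂ : Finset ℕ := (Finset.range N).image (Nat.nth (· ∈ T)) with hA₂
  have hsub : A₁ ∪ A₂ ⊆ (Finset.range w).filter (· ∈ S) := by
    intro y hy
    rcases Finset.mem_union.mp hy with hy | hy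
    · obtain ⟨h1, h2⟩ := Finset.mem_filter.mp hy
      exact Finset.mem_filter.mpr ⟨Finset.mem_range.mpr (lt_trans (Finset.mem_range.mp h1) huw), h2⟩
    · obtain ⟨r, hr, rfl⟩ := Finset.mem_image.mp hy
      refine Finset.mem_filter.mpr ⟨Finset.mem_range.mpr (hw r (Finset.mem_range.mp hr)), ?_⟩
      exact hTS (Nat.nth_mem_of_infinite hT r)
  have hdisj : Disjoint A₁ A₂ := by
    rw [Finset.disjoint_left]
    intro y hy₁ hy₂
    obtain ⟨h1, _⟩ := Finset.mem_filter.mp hy₁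
    obtain ⟨r, hr, rfl⟩ := Finset.mem_image.mp hy₂
    exact absurd (hu r (Finset.mem_range.mp hr)) (not_le.mpr (Finset.mem_range.mp h1))
  have hcard₂ : A₂.card = N := by
    rw [hA₂, Finset.card_image_of_injective _ (Nat.nth_injective (p := (· ∈ T)) hT),
      Finset.card_range]
  calc sidx S u + N = A₁.card + A₂.card := by rw [hcount, hcard₂]
    _ = (A₁ ∪ A₂).card := (Finset.card_union_of_disjoint hdisj).symm
    _ ≤ ((Finset.range w).filter (· ∈ S)).card := Finset.card_le_card hsub
    _ = sidx S w := (hcount w).symm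

/-- Simultaneous monochromatization of the decode colorings for all `kk ≤ n`. -/
lemma multi_mono {F : Set (Finset ℕ)} (hF : RegularThin F) (qq bb : ℕ → ℕ)
    (ψ : ∀ kk : ℕ, (Fin kk → Finset ℕ) → ((Fin kk → Fin (qq kk + 1)) → Fin (bb kk + 1)))
    (n : ℕ) {A : Set ℕ} (hA : A.Infinite) :
    ∃ S, S ⊆ A ∧ S.Infinite ∧ ∀ kk, 1 ≤ kk → kk ≤ n →
      ∀ K₁ K₂ : Set ℕ, K₁ ⊆ S → K₁.Infinite → K₂ ⊆ S → K₂.Infinite →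
        col F kk (ψ kk) K₁ = col F kk (ψ kk) K₂ := by
  induction n generalizing A with
  | zero => exact ⟨A, subset_rfl, hA, fun kk h1 h2 => by omega⟩
  | succ n ih =>
    obtain ⟨S, hSA, hSinf, hS⟩ := ih hA
    have hdet := col_determined hF (k := n+1) (by omega) (ψ (n+1))
    obtain ⟨S', hS'S, hS'inf, γ, hγ⟩ := gp_fin hdet hSinf
    refine ⟨S', hS'S.trans hSA, hS'inf, ?_⟩
    intro kk h1 h2 K₁ K₂ hK₁ hK₁i hK₂ hK₂i
    rcases Nat.lt_or_ge kk (n+1) with h | h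
    · exact hS kk h1 (by omega) K₁ K₂ (hK₁.trans hS'S) hK₁i (hK₂.trans hS'S) hK₂i
    · have hkk : kk = n+1 := by omega
      subst hkk
      rw [hγ K₁ hK₁ hK₁i, hγ K₂ hK₂ hK₂i]

end HOSM
end FusionDev


section AnalysisDev
namespace HOSM
open Set

noncomputable def gQ (k : ℕ) (C d : ℝ) : ℕ := ⌈(8*k*C)/d⌉₊ + 1
noncomputable def gB (k : ℕ) (C d : ℝ) : ℕ := ⌈k*C/(d/2)⌉₊ + 1
noncomputable def gav (k : ℕ) (C d : ℝ) (q : ℕ) : ℝ := q * (2 / (gQ k C d : ℝ)) - 1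
noncomputable def gdisc (k : ℕ) (C d : ℝ) (ν : ℝ) : Fin (gB k C d + 1) :=
  ⟨min ⌊ν/(d/2)⌋₊ (gB k C d), Nat.lt_succ_of_le (min_le_right _ _)⟩

lemma gQ_pos (k : ℕ) (C d : ℝ) : 0 < gQ k C d := Nat.succ_pos _

lemma gav_abs_le {k : ℕ} {C d : ℝ} {q : ℕ} (hq : q ≤ gQ k C d) : |gav k C d q| ≤ 1 := by
  have hQ : (0:ℝ) < (gQ k C d : ℝ) := by exact_mod_cast gQ_pos k C d
  rw [gav, abs_le]
  constructor
  · have : (0:ℝ) ≤ q * (2 / (gQ k C d : ℝ)) := by positivity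
    linarith
  · have h1 : (q:ℝ) ≤ (gQ k C d : ℝ) := by exact_mod_cast hq
    have h2 : (q:ℝ) * (2 / (gQ k C d : ℝ)) ≤ (gQ k C d : ℝ) * (2 / (gQ k C d : ℝ)) := by
      apply mul_le_mul_of_nonneg_right h1
      positivity
    have h3 : (gQ k C d : ℝ) * (2 / (gQ k C d : ℝ)) = 2 := by
      field_simp
    linarith

lemma gav_close {k : ℕ} {C d : ℝ} {a : ℝ} (ha : |a| ≤ 1) :
    ∃ q, q ≤ gQ k C d ∧ |gav k C d q - a| ≤ 2 / (gQ k C d : ℝ) := by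
  set Q := gQ k C d with hQdef
  have hQ : (0:ℝ) < (Q : ℝ) := by exact_mod_cast gQ_pos k C d
  rw [abs_le] at ha
  set β : ℝ := (a + 1) * Q / 2 with hβ
  have hβ0 : 0 ≤ β := by
    rw [hβ]
    have : 0 ≤ a + 1 := by linarith
    positivity
  have hβQ : β ≤ Q := by
    rw [hβ]
    rw [div_le_iff₀ (by norm_num : (0:ℝ) < 2)]
    nlinarith
  refine ⟨⌊β⌋₊, ?_, ?_⟩
  · have h1 : (⌊β⌋₊ : ℝ) ≤ β := Nat.floor_le hβ0
    have : (⌊β⌋₊ : ℝ) ≤ (Q : ℝ) := le_trans h1 hβQ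
    exact_mod_cast this
  · have h1 : (⌊β⌋₊ : ℝ) ≤ β := Nat.floor_le hβ0
    have h2 : β < (⌊β⌋₊ : ℝ) + 1 := Nat.lt_floor_add_one β
    have hkey : gav k C d ⌊β⌋₊ - a = (2 / (Q:ℝ)) * ((⌊β⌋₊ : ℝ) - β) := by
      rw [gav, hβ, ← hQdef]
      field_simp
      ring
    rw [hkey, abs_mul, abs_of_pos (by positivity : (0:ℝ) < 2 / (Q:ℝ))]
    have : |(⌊β⌋₊ : ℝ) - β| ≤ 1 := by
      rw [abs_le]
      constructor <;> linarith
    calc 2 / (Q:ℝ) * |(⌊β⌋₊ : ℝ) - β| ≤ 2 / (Q:ℝ) * 1 :=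
          mul_le_mul_of_nonneg_left this (by positivity)
      _ = 2 / (Q:ℝ) := mul_one _
  
lemma gdisc_close {k : ℕ} {C d : ℝ} (hC : 0 < C) (hd : 0 < d) {ν₁ ν₂ : ℝ}
    (h1 : 0 ≤ ν₁) (h2 : 0 ≤ ν₂) (hb1 : ν₁ ≤ k*C) (hb2 : ν₂ ≤ k*C)
    (heq : gdisc k C d ν₁ = gdisc k C d ν₂) : |ν₁ - ν₂| ≤ d/2 := by
  have hd2 : (0:ℝ) < d/2 := by linarith
  have hfl : ∀ ν : ℝ, 0 ≤ ν → ν ≤ k*C → ⌊ν/(d/2)⌋₊ ≤ gB k C d := by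
    intro ν hν hνb
    have : ν/(d/2) ≤ (k:ℝ)*C/(d/2) := by gcongr
    calc ⌊ν/(d/2)⌋₊ ≤ ⌊(k:ℝ)*C/(d/2)⌋₊ := Nat.floor_le_floor this
      _ ≤ ⌈(k:ℝ)*C/(d/2)⌉₊ := Nat.floor_le_ceil _
      _ ≤ gB k C d := by rw [gB]; omega
  have hmin1 : min ⌊ν₁/(d/2)⌋₊ (gB k C d) = ⌊ν₁/(d/2)⌋₊ := min_eq_left (hfl ν₁ h1 hb1)
  have hmin2 : min ⌊ν₂/(d/2)⌋₊ (gB k C d) = ⌊ν₂/(d/2)⌋₊ := min_eq_left (hfl ν₂ h2 hb2)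
  have hval : ⌊ν₁/(d/2)⌋₊ = ⌊ν₂/(d/2)⌋₊ := by
    have := congrArg Fin.val heq
    simpa [gdisc, hmin1, hmin2] using this
  -- floors equal implies close
  have hA1 : (⌊ν₁/(d/2)⌋₊ : ℝ) ≤ ν₁/(d/2) := Nat.floor_le (by positivity)
  have hA2 : ν₁/(d/2) < (⌊ν₁/(d/2)⌋₊ : ℝ) + 1 := Nat.lt_floor_add_one _
  have hB1 : (⌊ν₂/(d/2)⌋₊ : ℝ) ≤ ν₂/(d/2) := Nat.floor_le (by positivity)
  have hB2 : ν₂/(d/2) < (⌊ν₂/(d/2)⌋₊ : ℝ) + 1 := Nat.lt_floor_add_one _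
  rw [hval] at hA1 hA2
  have hdiff : |ν₁/(d/2) - ν₂/(d/2)| ≤ 1 := by
    rw [abs_le]
    constructor <;> linarith
  have : |ν₁ - ν₂| = |ν₁/(d/2) - ν₂/(d/2)| * (d/2) := by
    rw [div_sub_div_same, abs_div, abs_of_pos hd2, div_mul_cancel₀]
    exact ne_of_gt hd2
  rw [this]
  calc |ν₁/(d/2) - ν₂/(d/2)| * (d/2) ≤ 1 * (d/2) :=
        mul_le_mul_of_nonneg_right hdiff (le_of_lt hd2)
    _ = d/2 := one_mul _

variable {X : Type*} [NormedAddCommGroup X] [NormedSpace ℝ X]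

lemma norm_sum_bound {k : ℕ} {C : ℝ} (hC : 0 ≤ C) (y : Fin k → X)
    (hy : ∀ j, ‖y j‖ ≤ C) (a : Fin k → ℝ) (ha : ∀ j, |a j| ≤ 1) :
    ‖∑ j, a j • y j‖ ≤ k*C := by
  calc ‖∑ j, a j • y j‖ ≤ ∑ j, ‖a j • y j‖ := norm_sum_le _ _
    _ ≤ ∑ _j : Fin k, C := by
        apply Finset.sum_le_sum
        intro j _
        rw [norm_smul, Real.norm_eq_abs]
        calc |a j| * ‖y j‖ ≤ 1 * C := by
              apply mul_le_mul (ha j) (hy j) (norm_nonneg _) zero_le_one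
          _ = C := one_mul _
    _ = k*C := by simp [Finset.sum_const, Finset.card_univ, nsmul_eq_mul]

lemma norm_sum_lip {k : ℕ} {C η : ℝ} (hC : 0 ≤ C) (hη : 0 ≤ η) (y : Fin k → X)
    (hy : ∀ j, ‖y j‖ ≤ C) (a b : Fin k → ℝ) (hab : ∀ j, |a j - b j| ≤ η) :
    |‖∑ j, a j • y j‖ - ‖∑ j, b j • y j‖| ≤ k*η*C := by
  have h1 : |‖∑ j, a j • y j‖ - ‖∑ j, b j • y j‖| ≤ ‖(∑ j, a j • y j) - ∑ j, b j • y j‖ :=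
    abs_norm_sub_norm_le _ _
  have h2 : (∑ j, a j • y j) - ∑ j, b j • y j = ∑ j, (a j - b j) • y j := by
    rw [← Finset.sum_sub_distrib]
    congr 1
    ext j
    rw [sub_smul]
  rw [h2] at h1
  refine le_trans h1 ?_
  calc ‖∑ j, (a j - b j) • y j‖ ≤ ∑ j, ‖(a j - b j) • y j‖ := norm_sum_le _ _
    _ ≤ ∑ _j : Fin k, η*C := by
        apply Finset.sum_le_sum
        intro j _
        rw [norm_smul, Real.norm_eq_abs]
        exact mul_le_mul (hab j) (hy j) (norm_nonneg _) hη
    _ = k*(η*C) := by simp [Finset.sum_const, Finset.card_univ, nsmul_eq_mul]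
    _ = k*η*C := by ring

/-- Key stabilization estimate: if the discretized norms at all grid points agree,
then the norms at all coefficient tuples in `[-1,1]^k` agree up to `d`. -/
lemma stab_key {k : ℕ} {C d : ℝ} (hC : 0 < C) (hd : 0 < d)
    (y z : Fin k → X) (hy : ∀ j, ‖y j‖ ≤ C) (hz : ∀ j, ‖z j‖ ≤ C)
    (heq : ∀ g : Fin k → Fin (gQ k C d + 1),
      gdisc k C d ‖∑ j, gav k C d (g j).val • y j‖
        = gdisc k C d ‖∑ j, gav k C d (g j).val • z j‖)
    (a : Fin k → ℝ) (ha : ∀ j, |a j| ≤ 1) :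
    |‖∑ j, a j • y j‖ - ‖∑ j, a j • z j‖| ≤ d := by
  have hQ : (0:ℝ) < (gQ k C d : ℝ) := by exact_mod_cast gQ_pos k C d
  have hchoice : ∀ j : Fin k, ∃ q, q ≤ gQ k C d ∧
      |gav k C d q - a j| ≤ 2 / (gQ k C d : ℝ) := fun j => gav_close (ha j)
  choose q hq1 hq2 using hchoice
  set g : Fin k → Fin (gQ k C d + 1) := fun j => ⟨q j, Nat.lt_succ_of_le (hq1 j)⟩ with hg
  set b : Fin k → ℝ := fun j => gav k C d (q j) with hb
  have hbabs : ∀ j, |b j| ≤ 1 := fun j => gav_abs_le (hq1 j)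
  have hba : ∀ j, |b j - a j| ≤ 2 / (gQ k C d : ℝ) := hq2
  -- Lipschitz comparisons
  have hy1 : |‖∑ j, b j • y j‖ - ‖∑ j, a j • y j‖| ≤ k*(2 / (gQ k C d : ℝ))*C :=
    norm_sum_lip hC.le (by positivity) y hy b a hba
  have hz1 : |‖∑ j, b j • z j‖ - ‖∑ j, a j • z j‖| ≤ k*(2 / (gQ k C d : ℝ))*C :=
    norm_sum_lip hC.le (by positivity) z hz b a hba
  -- middle step: grid point
  have hmid : |‖∑ j, b j • y j‖ - ‖∑ j, b j • z j‖| ≤ d/2 := by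
    apply gdisc_close hC hd (norm_nonneg _) (norm_nonneg _)
      (norm_sum_bound hC.le y hy b hbabs) (norm_sum_bound hC.le z hz b hbabs)
    exact heq g
  -- numeric bound : k*(2/Q)*C ≤ d/4
  have hnum : (k:ℝ)*(2 / (gQ k C d : ℝ))*C ≤ d/4 := by
    have h8 : (8*k*C)/d ≤ (gQ k C d : ℝ) := by
      rw [gQ]
      push_cast
      calc (8*(k:ℝ)*C)/d ≤ ⌈(8*(k:ℝ)*C)/d⌉₊ := Nat.le_ceil _
        _ ≤ (⌈(8*(k:ℝ)*C)/d⌉₊ : ℝ) + 1 := by linarith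
    rw [le_div_iff₀ (by norm_num : (0:ℝ) < 4)]
    have hk0 : (0:ℝ) ≤ (k:ℝ) := Nat.cast_nonneg _
    have h2 : (k:ℝ)*(2 / (gQ k C d : ℝ))*C * 4 = (8*(k:ℝ)*C) / (gQ k C d : ℝ) := by
      field_simp
      ring
    rw [h2, div_le_iff₀ hQ]
    have h3 : (8*(k:ℝ)*C)/d * d ≤ (gQ k C d : ℝ) * d := by
      apply mul_le_mul_of_nonneg_right h8 hd.le
    rw [div_mul_cancel₀ _ (ne_of_gt hd)] at h3
    calc 8*(k:ℝ)*C ≤ (gQ k C d : ℝ) * d := h3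
      _ = d * (gQ k C d : ℝ) := by ring
  -- combine
  have habs : ∀ u v : ℝ, |u - v| ≤ d/4 + (d/2 + d/4) →
      |u - v| ≤ d := fun u v h => by linarith
  calc |‖∑ j, a j • y j‖ - ‖∑ j, a j • z j‖|
      ≤ |‖∑ j, a j • y j‖ - ‖∑ j, b j • y j‖| + |‖∑ j, b j • y j‖ - ‖∑ j, a j • z j‖| :=
        abs_sub_le _ _ _
    _ ≤ |‖∑ j, a j • y j‖ - ‖∑ j, b j • y j‖| +
        (|‖∑ j, b j • y j‖ - ‖∑ j, b j • z j‖| + |‖∑ j, b j • z j‖ - ‖∑ j, a j • z j‖|) := by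
        have := abs_sub_le ‖∑ j, b j • y j‖ ‖∑ j, b j • z j‖ ‖∑ j, a j • z j‖
        linarith
    _ ≤ d/4 + (d/2 + d/4) := by
        have e1 : |‖∑ j, a j • y j‖ - ‖∑ j, b j • y j‖|
            = |‖∑ j, b j • y j‖ - ‖∑ j, a j • y j‖| := abs_sub_comm _ _
        rw [e1]
        have := le_trans hy1 hnum
        have := le_trans hz1 hnum
        gcongr <;> linarith
    _ = d := by ring

end HOSM
end AnalysisDev


section MainDev
namespace HOSM
open Set

lemma inter_Ioi_infinite {A : Set ℕ} (hA : A.Infinite) (b : ℕ) :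
    (A ∩ Set.Ioi b).Infinite := by
  have h : A ∩ Set.Ioi b = A \ (A ∩ Set.Iic b) := by
    ext z
    simp only [Set.mem_inter_iff, Set.mem_diff, Set.mem_Ioi, Set.mem_Iic, not_and, not_le]
    tauto
  rw [h]
  exact hA.diff ((Set.finite_Iic _).subset Set.inter_subset_right)

end HOSM
end MainDev

/-- (Higher order Brunel–Sucheston stabilization.)  For every bounded
`F`-sequence in a Banach space, every sequence of positive errors `(δ_n)` and every infinite
`N` there is an infinite `M ⊆ N` such that the norms of plegma combinations stabilize up to
`δ_l`. -/
theorem bounded_F_sequence_stabilizes {X : Type*} [NormedAddCommGroup X]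
    [NormedSpace ℝ X] [CompleteSpace X]
    (F : Set (Finset ℕ)) (hF : RegularThin F) (x : Finset ℕ → X)
    (C : ℝ) (hC : 0 < C) (hbd : ∀ s ∈ F, ‖x s‖ ≤ C)
    (δ : ℕ → ℝ) (hδ : ∀ n, 0 < δ n) (N : Set ℕ) (hN : N.Infinite) :
    ∃ M : Set ℕ, M ⊆ N ∧ M.Infinite ∧
      ∀ l k : ℕ, 1 ≤ k → k ≤ l → ∀ a : Fin k → ℝ, (∀ j, |a j| ≤ 1) →
        ∀ s t : Fin k → Finset ℕ,
          IsPlegma s → (∀ j, s j ∈ restrict F M) → (∀ j, nth M l ≤ elt (s j) 0) →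
          IsPlegma t → (∀ j, t j ∈ restrict F M) → (∀ j, nth M l ≤ elt (t j) 0) →
          |‖∑ j, a j • x (t j)‖ - ‖∑ j, a j • x (s j)‖| ≤ δ l := by
  
  classical
  set ψ : ∀ (lv kk : ℕ), (Fin kk → Finset ℕ) →
      ((Fin kk → Fin (gQ kk C (δ lv) + 1)) → Fin (gB kk C (δ lv) + 1)) :=
    fun lv kk t g => gdisc kk C (δ lv) ‖∑ j, gav kk C (δ lv) (g j).val • x (t j)‖ with hψ
  have hstep : ∀ (j b : ℕ) (A : Set ℕ), A.Infinite →
      ∃ S : Set ℕ, S ⊆ A ∩ Set.Ioi b ∧ S.Infinite ∧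
        (∀ kk, 1 ≤ kk → kk ≤ j → ∀ K₁ K₂ : Set ℕ, K₁ ⊆ S → K₁.Infinite →
          K₂ ⊆ S → K₂.Infinite → col F kk (ψ j kk) K₁ = col F kk (ψ j kk) K₂) := by
    intro j b A hA
    obtain ⟨S, h1, h2, h3⟩ := multi_mono hF (fun kk => gQ kk C (δ j))
      (fun kk => gB kk C (δ j)) (fun kk => ψ j kk) j (inter_Ioi_infinite hA b)
    exact ⟨S, h1, h2, h3⟩
  set G : ℕ → ℕ × Set ℕ := fun j => Nat.rec ((Nat.nth (· ∈ N) 0, N) : ℕ × Set ℕ)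
    (fun j' prev => if h : prev.2.Infinite
      then ((fun S' => ((Nat.nth (· ∈ S') (5*(j'+4)), S') : ℕ × Set ℕ))
        (Classical.choose (hstep (j'+1) prev.1 prev.2 h)))
      else prev) j with hG
  set m : ℕ → ℕ := fun j => (G j).1 with hm
  set S : ℕ → Set ℕ := fun j => (G j).2 with hS
  have hGsucc : ∀ j, G (j+1) = if h : (S j).Infinite
      then ((fun S' => ((Nat.nth (· ∈ S') (5*(j+4)), S') : ℕ × Set ℕ))
        (Classical.choose (hstep (j+1) (m j) (S j) h)))
      else G j := fun j => rfl
  have keyI : ∀ j, (S j).Infinite := by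
    intro j
    induction j with
    | zero => exact hN
    | succ n ih =>
      have e : G (n+1) = ((fun S' => ((Nat.nth (· ∈ S') (5*(n+4)), S') : ℕ × Set ℕ))
          (Classical.choose (hstep (n+1) (m n) (S n) ih))) := by
        rw [hGsucc n]; exact dif_pos ih
      have h2 := (Classical.choose_spec (hstep (n+1) (m n) (S n) ih)).2.1
      show (G (n+1)).2.Infinite
      rw [e]
      exact h2
  have hspec : ∀ j, S (j+1) ⊆ S j ∩ Set.Ioi (m j) ∧
      m (j+1) = Nat.nth (· ∈ S (j+1)) (5*(j+4)) ∧
      (∀ kk, 1 ≤ kk → kk ≤ j+1 → ∀ K₁ K₂ : Set ℕ, K₁ ⊆ S (j+1) → K₁.Infinite →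
        K₂ ⊆ S (j+1) → K₂.Infinite →
        col F kk (ψ (j+1) kk) K₁ = col F kk (ψ (j+1) kk) K₂) := by
    intro j
    have e : G (j+1) = ((fun S' => ((Nat.nth (· ∈ S') (5*(j+4)), S') : ℕ × Set ℕ))
        (Classical.choose (hstep (j+1) (m j) (S j) (keyI j)))) := by
      rw [hGsucc j]; exact dif_pos (keyI j)
    have hsp := Classical.choose_spec (hstep (j+1) (m j) (S j) (keyI j))
    have eS : S (j+1) = Classical.choose (hstep (j+1) (m j) (S j) (keyI j)) := by
      show (G (j+1)).2 = _
      rw [e]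
    have em : m (j+1) = Nat.nth (· ∈ S (j+1)) (5*(j+4)) := by
      show (G (j+1)).1 = _
      rw [e, eS]
    refine ⟨?_, em, ?_⟩
    · rw [eS]; exact hsp.1
    · rw [eS]; exact hsp.2.2
  have hSsub : ∀ j, S (j+1) ⊆ S j := fun j => (hspec j).1.trans Set.inter_subset_left
  have hSIoi : ∀ j, S (j+1) ⊆ Set.Ioi (m j) := fun j => (hspec j).1.trans Set.inter_subset_right
  have hchain : ∀ l j, l ≤ j → S j ⊆ S l := by
    intro l j hlj
    induction j with
    | zero => rw [Nat.le_zero.mp hlj]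
    | succ n ih =>
      rcases Nat.lt_or_ge l (n+1) with h | h
      · exact (hSsub n).trans (ih (Nat.lt_succ_iff.mp h))
      · rw [Nat.le_antisymm hlj h]
  have hmem : ∀ j, m j ∈ S j := by
    intro j
    cases j with
    | zero => exact Nat.nth_mem_of_infinite hN 0
    | succ n =>
      rw [(hspec n).2.1]
      exact Nat.nth_mem_of_infinite (keyI (n+1)) _
  have hmmono : StrictMono m := by
    apply strictMono_nat_of_lt_succ
    intro j
    exact (hSIoi j) (hmem (j+1))
  have hSN : ∀ j, S j ⊆ N := fun j => hchain 0 j (Nat.zero_le j)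
  have hgap : ∀ l j, l ≤ j → sidx (S l) (m j) + 5*(l+1) ≤ sidx (S l) (m (j+1)) := by
    intro l j hlj
    apply sidx_gap (T := S (j+1)) (keyI (j+1)) (hchain l (j+1) (by omega))
      (by omega : 0 < 5*(l+1))
    · intro r hr
      exact le_of_lt ((hSIoi j) (Nat.nth_mem_of_infinite (keyI (j+1)) r))
    · intro r hr
      rw [(hspec j).2.1]
      exact Nat.nth_strictMono (keyI (j+1)) (by omega)
  refine ⟨Set.range m, ?_, Set.infinite_range_of_injective hmmono.injective, ?_⟩
  · rintro y ⟨j, rfl⟩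
    exact hSN j (hmem j)
  intro l k hk1 hkl a ha s t hsple hsF hsmin htple htF htmin
  have hl1 : 1 ≤ l := hk1.trans hkl
  have hnthM : nth (Set.range m) l = m l := by
    rw [nth]
    exact GPX.nth_range hmmono l
  have hbuild : ∀ (u : Fin k → Finset ℕ), (∀ j, u j ∈ restrict F (Set.range m)) →
      (∀ j, nth (Set.range m) l ≤ elt (u j) 0) →
      ∀ i : Fin k, ∀ m', m' < (u i).card → ∃ j, l ≤ j ∧ elt (u i) m' = m j := by
    intro u huF humin i m' hm'
    obtain ⟨j, hj⟩ := (huF i).2 (Finset.mem_coe.mpr (elt_mem hm'))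
    refine ⟨j, ?_, hj.symm⟩
    have h1 : m l ≤ elt (u i) m' := by
      calc m l = nth (Set.range m) l := hnthM.symm
        _ ≤ elt (u i) 0 := humin i
        _ ≤ elt (u i) m' := elt_le_elt (Nat.zero_le m') hm'
    rw [← hj] at h1
    exact hmmono.le_iff_le.mp h1
  have hμS : ∀ j, l ≤ j → m j ∈ S l := fun j hj => hchain l j hj (hmem j)
  obtain ⟨Ks, hKsS, hKsinf, hKs⟩ := encode (keyI l) hk1 hkl hmmono (hgap l) hμS s
    hsple.1 hsple (hbuild s hsF hsmin)
  obtain ⟨Kt, hKtS, hKtinf, hKt⟩ := encode (keyI l) hk1 hkl hmmono (hgap l) hμS t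
    htple.1 htple (hbuild t htF htmin)
  have hWs : Wit F k Ks s := fun i => ⟨(hsF i).1, fun m' hm' => (hKs i m' hm').symm⟩
  have hWt : Wit F k Kt t := fun i => ⟨(htF i).1, fun m' hm' => (hKt i m' hm').symm⟩
  have hcs : col F k (ψ l k) Ks = ψ l k s := col_eq_of_wit hF.1 _ hKsinf hWs
  have hct : col F k (ψ l k) Kt = ψ l k t := col_eq_of_wit hF.1 _ hKtinf hWt
  have hmono : col F k (ψ l k) Kt = col F k (ψ l k) Ks := by
    obtain ⟨l', rfl⟩ : ∃ l', l = l' + 1 := ⟨l - 1, by omega⟩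
    exact (hspec l').2.2 k hk1 hkl Kt Ks hKtS hKtinf hKsS hKsinf
  have hψeq : ψ l k t = ψ l k s := by rw [← hcs, ← hct, hmono]
  have hfin := stab_key (k := k) hC (hδ l) (fun j => x (t j)) (fun j => x (s j))
    (fun j => hbd _ (htF j).1) (fun j => hbd _ (hsF j).1)
    (fun g => congrFun hψeq g) a ha
  exact hfin
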